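/- Let n ≥ 3 be an integer and let α be a real number with e/(1+e) < α < 1 and ⌈α·n⌉ ≤ n − 1, where e is Euler's number. Then the number of trees on Fin n having at least ⌈α·n⌉ leaves is at most (n − ⌈α·n⌉ + 1) · n! · 2^{n−3} · e^{⌈α·n⌉} · ((1−α)/α)^{⌈α·n⌉}. -/

import Mathlib

set_option linter.unusedSectionVars false
set_option linter.unusedVariables false
set_option maxHeartbeats 1000000

open SimpleGraph Finset

variable {V : Type*} [Fintype V] [DecidableEq V]

section Tree
variable (G : SimpleGraph V) (ht : G.IsTree) (r : V)

/-- a chosen path from `v` to `r` in a connected graph -/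
noncomputable def pat (v : V) : G.Path v r :=
  ((ht.isConnected.preconnected v r).some.toPath)

lemma pat_unique {v : V} (q : G.Walk v r) (hq : q.IsPath) : q = (pat G ht r v).1 := by
  have h := (isAcyclic_iff_path_unique.mp ht.IsAcyclic) ⟨q, hq⟩ (pat G ht r v)
  exact congrArg Subtype.val h

/-- parent function towards root `r` -/
noncomputable def par (v : V) : V :=
  if v = r then r else ((pat G ht r v).1).getVert 1

lemma par_self : par G ht r r = r := by simp [par]

lemma adj_par {v : V} (hv : v ≠ r) : G.Adj v (par G ht r v) := by
  have h0 : ((pat G ht r v).1).length ≠ 0 := fun h => hv (Walk.eq_of_length_eq_zero h)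
  have := Walk.adj_getVert_succ (pat G ht r v).1 (i := 0) (Nat.pos_of_ne_zero h0)
  simpa [par, hv] using this

lemma eq_par_of_adj {u v : V} (hadj : G.Adj u v) :
    (u ≠ r ∧ par G ht r u = v) ∨ (v ≠ r ∧ par G ht r v = u) := by
  by_cases hu : u = r
  · right
    have hadj' : G.Adj r v := hu ▸ hadj
    have hv : v ≠ r := hadj'.ne'
    refine ⟨hv, ?_⟩
    have hW : (Walk.cons hadj'.symm Walk.nil : G.Walk v r).IsPath := by
      simp [hadj'.ne']
    have := pat_unique G ht r _ hW
    rw [par, if_neg hv, ← this, hu]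
    simp
  · by_cases hv : v = r
    · left
      have hadj' : G.Adj u r := hv ▸ hadj
      refine ⟨hu, ?_⟩
      have hW : (Walk.cons hadj' Walk.nil : G.Walk u r).IsPath := by
        simp [hadj'.ne]
      have := pat_unique G ht r _ hW
      rw [par, if_neg hu, ← this, hv]
      simp
    · set p := (pat G ht r u).1 with hp
      by_cases hvp : v ∈ p.support
      · left
        refine ⟨hu, ?_⟩
        -- takeUntil is a path from u to v; so is the single edge; uniqueness
        have htu : (p.takeUntil v hvp).IsPath := (pat G ht r u).2.takeUntil hvp
        have hsing : (Walk.cons hadj Walk.nil : G.Walk u v).IsPath := by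
          simp [hadj.ne]
        have hequ := (isAcyclic_iff_path_unique.mp ht.IsAcyclic)
          ⟨p.takeUntil v hvp, htu⟩ ⟨Walk.cons hadj Walk.nil, hsing⟩
        have hequ' : p.takeUntil v hvp = Walk.cons hadj Walk.nil :=
          congrArg Subtype.val hequ
        have hspec := p.take_spec hvp
        rw [hequ'] at hspec
        rw [par, if_neg hu, ← hp, ← hspec]
        simp
      · right
        refine ⟨hv, ?_⟩
        have hW : (Walk.cons hadj.symm p : G.Walk v r).IsPath :=
          (pat G ht r u).2.cons hvp
        have := pat_unique G ht r _ hW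
        rw [par, if_neg hv, ← this]
        simp

lemma adj_iff_par {u v : V} :
    G.Adj u v ↔ (u ≠ r ∧ par G ht r u = v) ∨ (v ≠ r ∧ par G ht r v = u) := by
  constructor
  · exact eq_par_of_adj G ht r
  · rintro (⟨hu, rfl⟩ | ⟨hv, rfl⟩)
    · exact adj_par G ht r hu
    · exact (adj_par G ht r hv).symm

lemma tree_eq_of_par_eq {G G' : SimpleGraph V} (ht : G.IsTree) (ht' : G'.IsTree)
    (h : par G ht r = par G' ht' r) : G = G' := by
  ext u v
  rw [adj_iff_par G ht r, adj_iff_par G' ht' r, h]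

/-- a leaf (`Nat.card` of neighbor set is 1) has a unique neighbor -/
lemma leaf_unique_nbr {u a b : V} (hu : Nat.card (G.neighborSet u) = 1)
    (ha : G.Adj u a) (hb : G.Adj u b) : a = b := by
  have hs := (Nat.card_eq_one_iff_unique.mp hu).1
  have := @Subsingleton.elim _ hs ⟨a, ha⟩ ⟨b, hb⟩
  exact congrArg Subtype.val this

/-- a non-root leaf is nobody's parent -/
lemma par_ne_leaf {u : V} (hu : Nat.card (G.neighborSet u) = 1) (hur : u ≠ r)
    (v : V) : par G ht r v ≠ u := by
  intro hpar
  by_cases hv : v = r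
  · rw [hv, par_self] at hpar; exact hur hpar.symm
  · have hadj : G.Adj v u := hpar ▸ adj_par G ht r hv
    -- the path from v to r starts v, u, then must return to v
    set p := (pat G ht r v).1 with hp
    obtain ⟨w, hw, q, hq⟩ := Walk.exists_eq_cons_of_ne hv p
    have hw1 : p.getVert 1 = w := by rw [hq]; simp
    have hwu : w = u := by
      have : par G ht r v = p.getVert 1 := by rw [par, if_neg hv]
      rw [this, hw1] at hpar; exact hpar
    have hwr : w ≠ r := hwu ▸ hur
    obtain ⟨x, hx, q2, hq2⟩ := Walk.exists_eq_cons_of_ne hwr q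
    have hux : G.Adj u x := hwu ▸ hx
    have hxv : x = v := leaf_unique_nbr G hu hux hadj.symm
    have hvq2 : v ∈ q2.support := hxv ▸ q2.start_mem_support
    have hnd := (pat G ht r v).2.support_nodup
    rw [← hp, hq, hq2] at hnd
    simp only [Walk.support_cons, List.nodup_cons] at hnd
    exact hnd.1 (by simp [hvq2])

/-- in a connected graph on ≥ 3 vertices, two leaves cannot be adjacent -/
lemma no_adj_leaves (hc : G.Connected) (hcard : 3 ≤ Fintype.card V) {u v : V}
    (hu : Nat.card (G.neighborSet u) = 1) (hv : Nat.card (G.neighborSet v) = 1)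
    (hadj : G.Adj u v) : False := by
  have hne : u ≠ v := hadj.ne
  obtain ⟨x, hxu, hxv⟩ : ∃ x, x ≠ u ∧ x ≠ v := by
    have h2 : ({u, v} : Finset V).card < Fintype.card V := by
      calc ({u, v} : Finset V).card ≤ 2 := Finset.card_insert_le _ _ |>.trans (by simp)
        _ < 3 := by norm_num
        _ ≤ Fintype.card V := hcard
    have hpos : 0 < ({u, v}ᶜ : Finset V).card := by
      rw [Finset.card_compl]; omega
    obtain ⟨x, hx⟩ := Finset.card_pos.mp hpos
    rw [Finset.mem_compl, Finset.mem_insert, not_or, Finset.mem_singleton] at hx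
    exact ⟨x, hx.1, hx.2⟩
  -- path from u to x must go u, v, u : contradiction
  obtain ⟨q⟩ := hc.preconnected u x
  set p := (q.toPath : G.Walk u x) with hp
  have hpath : p.IsPath := q.toPath.2
  obtain ⟨a, ha, p2, hp2⟩ := Walk.exists_eq_cons_of_ne (Ne.symm hxu) p
  have hav : a = v := leaf_unique_nbr G hu ha hadj
  have har : a ≠ x := hav ▸ (Ne.symm hxv)
  obtain ⟨b, hb, p3, hp3⟩ := Walk.exists_eq_cons_of_ne har p2
  have hadj' : G.Adj a u := hav ▸ hadj.symm
  have hbu : b = u := leaf_unique_nbr G (hav ▸ hv) hb hadj'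
  have hup3 : u ∈ p3.support := hbu ▸ p3.start_mem_support
  have hnd := hpath.support_nodup
  rw [hp2, hp3] at hnd
  simp only [Walk.support_cons, List.nodup_cons] at hnd
  exact hnd.1 (by simp [hup3])

end Tree


section Count

variable {n : ℕ}

noncomputable def rootOf (hn : 0 < n) (S : Finset (Fin n)) : Fin n :=
  if h : S.Nonempty then S.max' h else ⟨0, hn⟩

noncomputable def Afun (hn : 0 < n) (S : Finset (Fin n)) (v : Fin n) : Finset (Fin n) :=
  if v = rootOf hn S then {rootOf hn S} else if v ∈ S then Sᶜ else insert (rootOf hn S) Sᶜ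

noncomputable def Bfin (hn : 0 < n) (k : ℕ) : Finset (Σ _ : Finset (Fin n), Fin n → Fin n) :=
  (Finset.univ.powersetCard k).sigma (fun S => Fintype.piFinset (Afun hn S))

lemma rootOf_mem (hn : 0 < n) {S : Finset (Fin n)} (hS : S.Nonempty) :
    rootOf hn S ∈ S := by
  rw [rootOf, dif_pos hS]; exact S.max'_mem hS

lemma card_Bfin (hn : 0 < n) {k : ℕ} (hk : 1 ≤ k) (hkn : k ≤ n) :
    (Bfin hn k).card = n.choose k * ((n - k) ^ (k - 1) * (n - k + 1) ^ (n - k)) := by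
  rw [Bfin, Finset.card_sigma]
  have hcst : ∀ S ∈ Finset.univ.powersetCard k,
      (Fintype.piFinset (Afun hn S)).card = (n - k) ^ (k - 1) * (n - k + 1) ^ (n - k) := by
    intro S hS
    rw [Finset.mem_powersetCard_univ] at hS
    have hSne : S.Nonempty := Finset.card_pos.mp (by omega)
    set r := rootOf hn S with hr
    have hrS : r ∈ S := rootOf_mem hn hSne
    have hcompl : (Sᶜ : Finset (Fin n)).card = n - k := by
      rw [Finset.card_compl, hS, Fintype.card_fin]
    rw [Fintype.card_piFinset]
    rw [← Finset.prod_mul_prod_compl S]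
    have h1 : ∏ v ∈ S, (Afun hn S v).card = (n - k) ^ (k - 1) := by
      rw [← Finset.mul_prod_erase S _ hrS]
      have hroot : (Afun hn S r).card = 1 := by rw [Afun, if_pos rfl]; simp
      have hrest : ∏ v ∈ S.erase r, (Afun hn S v).card = (n - k) ^ (k - 1) := by
        rw [Finset.prod_congr rfl (fun v hv => ?_), Finset.prod_const,
          Finset.card_erase_of_mem hrS, hS]
        rw [Afun, if_neg (Finset.ne_of_mem_erase hv), if_pos (Finset.mem_of_mem_erase hv),
          hcompl]
      rw [hroot, hrest, one_mul]
    have h2 : ∏ v ∈ Sᶜ, (Afun hn S v).card = (n - k + 1) ^ (n - k) := by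
      rw [Finset.prod_congr rfl (fun v hv => ?_), Finset.prod_const, hcompl]
      rw [Finset.mem_compl] at hv
      have hvr : v ≠ r := fun h => hv (h ▸ hrS)
      rw [Afun, if_neg hvr, if_neg hv, Finset.card_insert_of_notMem (by simp [← hr, hrS]),
        hcompl]
    rw [h1, h2]
  rw [Finset.sum_congr rfl hcst, Finset.sum_const, Finset.card_powersetCard,
    Finset.card_univ, Fintype.card_fin, smul_eq_mul]

end Count



lemma ratio_pow_le_exp {a b : ℕ} (ha : 1 ≤ a) (hba : b ≤ a) :
    (((a : ℝ) + 1) / a) ^ b ≤ Real.exp 1 := by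
  have ha0 : (0:ℝ) < a := by exact_mod_cast ha
  have h1 : ((a:ℝ) + 1) / a = 1 + 1/a := by field_simp
  have h2 : (1 : ℝ) + 1/a ≤ Real.exp (1/a) := by
    have := Real.add_one_le_exp (1/(a:ℝ))
    linarith
  calc (((a : ℝ) + 1) / a) ^ b ≤ Real.exp (1/a) ^ b := by
        rw [h1]; exact pow_le_pow_left₀ (by positivity) h2 b
    _ = Real.exp (b/a) := by
        rw [← Real.exp_nat_mul]; ring_nf
    _ ≤ Real.exp 1 := by
        apply Real.exp_le_exp.mpr
        rw [div_le_one ha0]; exact_mod_cast hba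

lemma pow_self_le_exp_factorial {k : ℕ} (hk : 1 ≤ k) :
    (k : ℝ) ^ k ≤ Real.exp 1 ^ (k - 1) * k.factorial := by
  induction k with
  | zero => omega
  | succ j ih =>
    rcases Nat.eq_or_lt_of_le hk with h | h
    · simp [← h]
    · have hj : 1 ≤ j := by omega
      have ihj := ih hj
      have hj0 : (0:ℝ) < j := by exact_mod_cast hj
      have hstep : ((j:ℝ) + 1) ^ j ≤ Real.exp 1 * (j:ℝ) ^ j := by
        have := ratio_pow_le_exp hj (le_refl j)
        have heq : ((j:ℝ) + 1) ^ j = (((j:ℝ)+1)/j)^j * (j:ℝ)^j := by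
          rw [div_pow]; field_simp
        rw [heq]
        exact mul_le_mul_of_nonneg_right this (by positivity)
      have : ((j:ℝ) + 1) ^ (j + 1) = ((j:ℝ)+1) * ((j:ℝ)+1)^j := by ring
      push_cast
      rw [this]
      calc ((j:ℝ)+1) * ((j:ℝ)+1)^j ≤ ((j:ℝ)+1) * (Real.exp 1 * (j:ℝ)^j) := by
            apply mul_le_mul_of_nonneg_left hstep (by positivity)
        _ ≤ ((j:ℝ)+1) * (Real.exp 1 * (Real.exp 1 ^ (j-1) * j.factorial)) := by
            apply mul_le_mul_of_nonneg_left _ (by positivity)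
            exact mul_le_mul_of_nonneg_left ihj (le_of_lt (Real.exp_pos 1))
        _ = Real.exp 1 ^ (j - 1 + 1) * (((j:ℝ)+1) * j.factorial) := by ring
        _ = Real.exp 1 ^ (j + 1 - 1) * ((j+1).factorial) := by
            rw [show j - 1 + 1 = j + 1 - 1 by omega, Nat.factorial_succ]
            push_cast; ring

lemma succ_pow_le_four_pow_factorial {m : ℕ} (hm : 1 ≤ m) :
    ((m : ℝ) + 1) ^ (m - 1) ≤ 4 ^ (m - 1) * m.factorial := by
  induction m with
  | zero => omega
  | succ j ih =>
    rcases Nat.lt_or_ge j 2 with h | h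
    · interval_cases j
      · norm_num
      · norm_num [Nat.factorial]
    · -- j ≥ 2, prove for j+1 : ((j+2):ℝ)^j ≤ 4^j * (j+1)!
      have hj1 : 1 ≤ j := by omega
      have ihj := ih hj1
      have hexp : (((j:ℝ)+1+1)/((j:ℝ)+1)) ^ (j-1) ≤ Real.exp 1 := by
        have := ratio_pow_le_exp (a := j+1) (b := j-1) (by omega) (by omega)
        push_cast at this ⊢
        exact this
      have hj0 : (0:ℝ) < (j:ℝ) + 1 := by positivity
      have hsplit : ((j:ℝ) + 2) ^ (j-1) ≤ Real.exp 1 * ((j:ℝ)+1)^(j-1) := by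
        have heq : ((j:ℝ) + 2) ^ (j-1) = (((j:ℝ)+1+1)/((j:ℝ)+1))^(j-1) * ((j:ℝ)+1)^(j-1) := by
          rw [div_pow]
          rw [div_mul_cancel₀]
          · ring_nf
          · positivity
        rw [heq]
        exact mul_le_mul_of_nonneg_right hexp (by positivity)
      have he3 : Real.exp 1 ≤ 3 := by
        have := Real.exp_one_lt_d9
        linarith
      have hkey : ((j:ℝ) + 2) * Real.exp 1 ≤ 4 * ((j:ℝ) + 1) := by
        have hj2 : (2:ℝ) ≤ j := by exact_mod_cast h
        nlinarith [Real.exp_pos 1]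
      have hstep : ((j:ℝ) + 2) ^ j ≤ ((j:ℝ)+2) * Real.exp 1 * ((j:ℝ)+1)^(j-1) := by
        have : ((j:ℝ) + 2) ^ j = ((j:ℝ)+2) * ((j:ℝ)+2)^(j-1) := by
          rw [← pow_succ']
          congr 1
          omega
        rw [this, mul_assoc]
        exact mul_le_mul_of_nonneg_left hsplit (by positivity)
      have hgoal : ((j:ℝ) + 2) ^ j ≤ 4 ^ j * (j+1).factorial := by
        calc ((j:ℝ) + 2) ^ j ≤ ((j:ℝ)+2) * Real.exp 1 * ((j:ℝ)+1)^(j-1) := hstep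
          _ ≤ ((j:ℝ)+2) * Real.exp 1 * (4^(j-1) * j.factorial) := by
              apply mul_le_mul_of_nonneg_left ihj
              positivity
          _ ≤ 4 * ((j:ℝ)+1) * (4^(j-1) * j.factorial) := by
              apply mul_le_mul_of_nonneg_right hkey
              positivity
          _ = 4 ^ (j-1+1) * (((j:ℝ)+1) * j.factorial) := by ring
          _ = 4 ^ j * (j+1).factorial := by
              rw [show j - 1 + 1 = j by omega, Nat.factorial_succ]
              push_cast; ring
      have : ((j:ℝ) + 1 + 1) = ((j:ℝ) + 2) := by ring
      rw [show j + 1 - 1 = j by omega]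
      push_cast
      rw [this]
      exact_mod_cast hgoal

/-- The number of trees on `Fin n` (connected acyclic simple graphs) having at least `k`
leaves (vertices of degree `1`, i.e. with exactly one neighbor). -/
noncomputable def numTreesWithAtLeastLeaves (n k : ℕ) : ℕ :=
  Nat.card {G : SimpleGraph (Fin n) //
    G.IsTree ∧ k ≤ Nat.card {v : Fin n // Nat.card (G.neighborSet v) = 1}}

lemma numTrees_le_count {n k : ℕ} (hn : 3 ≤ n) (hk : 1 ≤ k) (hkn : k ≤ n) :
    numTreesWithAtLeastLeaves n k
      ≤ n.choose k * ((n - k) ^ (k - 1) * (n - k + 1) ^ (n - k)) := by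
  classical
  have hn0 : 0 < n := by omega
  rw [numTreesWithAtLeastLeaves, ← card_Bfin hn0 hk hkn]
  rw [← Nat.card_eq_finsetCard]
  -- construct an injection
  set L : SimpleGraph (Fin n) → Finset (Fin n) :=
    fun G => Finset.univ.filter (fun v => Nat.card (G.neighborSet v) = 1) with hL
  have hcardL : ∀ G : SimpleGraph (Fin n),
      Nat.card {v : Fin n // Nat.card (G.neighborSet v) = 1} = (L G).card := by
    intro G
    rw [Nat.card_eq_fintype_card, Fintype.card_subtype]
  have hSex : ∀ G : SimpleGraph (Fin n), G.IsTree →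
      k ≤ Nat.card {v : Fin n // Nat.card (G.neighborSet v) = 1} →
      ∃ S ⊆ L G, S.card = k := by
    intro G hT hle
    exact Finset.exists_subset_card_eq (by rw [← hcardL]; exact hle)
  set T := {G : SimpleGraph (Fin n) //
      G.IsTree ∧ k ≤ Nat.card {v : Fin n // Nat.card (G.neighborSet v) = 1}} with hT0
  set Sof : T → Finset (Fin n) := fun x => (hSex x.1 x.2.1 x.2.2).choose with hSof
  have hmem : ∀ x : T,
      (⟨Sof x, par x.1 x.2.1 (rootOf hn0 (Sof x))⟩ :
        Σ _ : Finset (Fin n), Fin n → Fin n) ∈ Bfin hn0 k := by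
    rintro ⟨G, hT, hle⟩
    set S := Sof ⟨G, hT, hle⟩ with hS
    obtain ⟨hSsub, hScard⟩ := (hSex G hT hle).choose_spec
    rw [show (hSex G hT hle).choose = S from rfl] at hSsub hScard
    rw [Bfin, Finset.mem_sigma]
    constructor
    · exact Finset.mem_powersetCard_univ.mpr hScard
    · rw [Fintype.mem_piFinset]
      intro v
      set r := rootOf hn0 S with hr
      have hSne : S.Nonempty := Finset.card_pos.mp (by omega)
      have hrS : r ∈ S := rootOf_mem hn0 hSne
      have hleaf : ∀ u ∈ S, Nat.card (G.neighborSet u) = 1 := by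
        intro u hu
        have := hSsub hu
        rw [hL, Finset.mem_filter] at this
        exact this.2
      have hcard3 : 3 ≤ Fintype.card (Fin n) := by rw [Fintype.card_fin]; exact hn
      show par G hT r v ∈ Afun hn0 S v
      by_cases hvr : v = r
      · rw [Afun, hvr, if_pos rfl, par_self]
        simp
        exact hr
      · have hnotleaf : par G hT r v ∉ S ∨ par G hT r v = r := by
          by_cases hpr : par G hT r v = r
          · right; exact hpr
          · left
            intro hmem
            exact par_ne_leaf G hT r (hleaf _ hmem) hpr v rfl
        rw [Afun, if_neg hvr]
        by_cases hvS : v ∈ S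
        · rw [if_pos hvS, Finset.mem_compl]
          rcases hnotleaf with h | h
          · exact h
          · exfalso
            have hadj : G.Adj v (par G hT r v) := adj_par G hT r hvr
            rw [h] at hadj
            exact no_adj_leaves G hT.isConnected hcard3 (hleaf _ hvS) (hleaf _ hrS) hadj
        · rw [if_neg hvS, Finset.mem_insert, Finset.mem_compl]
          rcases hnotleaf with h | h
          · right; exact h
          · left; exact h
  set Φ : T → {x // x ∈ Bfin hn0 k} :=
    fun x => ⟨⟨Sof x, par x.1 x.2.1 (rootOf hn0 (Sof x))⟩, hmem x⟩ with hPhi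
  have hinj : Function.Injective Φ := by
    intro a b heq
    have h1 := congrArg Subtype.val heq
    rw [hPhi] at h1
    dsimp only at h1
    rw [Sigma.mk.inj_iff] at h1
    obtain ⟨hSeq, hpareq⟩ := h1
    have hp := eq_of_heq hpareq
    rw [← hSeq] at hp
    have hGeq : a.1 = b.1 :=
      tree_eq_of_par_eq (r := rootOf hn0 (Sof a)) a.2.1 b.2.1 hp
    exact Subtype.ext hGeq
  exact Nat.card_le_card_of_injective Φ hinj

/-- For `n ≥ 3` and real `α` with `e/(1+e) < α < 1` and `⌈αn⌉ ≤ n − 1`, the number of trees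
on `Fin n` with at least `⌈αn⌉` leaves is at most
`(n − ⌈αn⌉ + 1) · n! · 2^{n−3} · e^{⌈αn⌉} · ((1−α)/α)^{⌈αn⌉}`. -/
theorem count_trees_with_many_leaves_upper_bound (n : ℕ) (hn : 3 ≤ n) (α : ℝ)
    (hα₁ : Real.exp 1 / (1 + Real.exp 1) < α) (hα₂ : α < 1)
    (hceil : ⌈α * n⌉₊ ≤ n - 1) :
    (numTreesWithAtLeastLeaves n ⌈α * n⌉₊ : ℝ)
      ≤ ((n - ⌈α * n⌉₊ + 1 : ℕ) : ℝ) * (n.factorial : ℝ) * 2 ^ (n - 3)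
          * Real.exp 1 ^ ⌈α * n⌉₊ * ((1 - α) / α) ^ ⌈α * n⌉₊ := by
  set e := Real.exp 1 with hedef
  set k := ⌈α * n⌉₊ with hkdef
  set m := n - k with hmdef
  have he2 : (2:ℝ) < e := lt_trans (by norm_num) Real.exp_one_gt_d9
  have hepos : (0:ℝ) < e := by linarith
  have hα0 : 0 < α := lt_trans (by positivity) hα₁
  have hkreal : α * n ≤ (k:ℝ) := Nat.le_ceil _
  have hkn : k ≤ n := by omega
  have hnm : n = k + m := by omega
  have hm1 : 1 ≤ m := by omega
  -- α > 2/3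
  have hα' : e < α * (1 + e) := (div_lt_iff₀ (by positivity)).mp hα₁
  have hα23 : (2:ℝ)/3 < α := by nlinarith [mul_nonneg (le_of_lt (sub_pos.mpr he2)) (le_of_lt (sub_pos.mpr hα₂))]
  have hnreal : (3:ℝ) ≤ n := by exact_mod_cast hn
  have h2kr : (n:ℝ) + 1 < 2 * k := by nlinarith
  have h2k : n + 2 ≤ 2 * k := by
    have : n + 1 < 2 * k := by exact_mod_cast h2kr
    omega
  have hk3 : 3 ≤ k := by omega
  have hn2m : 2 * m ≤ n := by omega
  -- the counting bound
  have hcount := numTrees_le_count (n := n) (k := k) hn (by omega) hkn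
  set N := numTreesWithAtLeastLeaves n k with hN
  set M := (m:ℝ) with hM
  set K := (k:ℝ) with hK
  have hMnk : M = (n:ℝ) - K := by rw [hM, hK, hmdef, Nat.cast_sub hkn]
  have hKpos : (0:ℝ) < K := by rw [hK]; exact_mod_cast (by omega : 0 < k)
  have hMpos : (0:ℝ) < M := by rw [hM]; exact_mod_cast hm1
  have hM1 : (1:ℝ) ≤ M := by rw [hM]; exact_mod_cast hm1
  have hcast : (N:ℝ) ≤ (n.choose k : ℝ) * (M^(k-1) * (M+1)^m) := by
    have := hcount
    have h2 : (N:ℝ) ≤ ((n.choose k * ((n - k) ^ (k - 1) * (n - k + 1) ^ (n - k)) : ℕ) : ℝ) := by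
      exact_mod_cast this
    calc (N:ℝ) ≤ _ := h2
      _ = (n.choose k : ℝ) * (M^(k-1) * (M+1)^m) := by
          push_cast [hmdef]
          ring
  -- fraction comparison
  have hfrac : M / K ≤ (1 - α) / α := by
    rw [div_le_div_iff₀ hKpos hα0]
    have : α * (n:ℝ) ≤ K := hkreal
    rw [hMnk]
    nlinarith
  have hfracpow : (M/K)^k ≤ ((1-α)/α)^k :=
    pow_le_pow_left₀ (by positivity) hfrac k
  -- key inequality
  have hm' : m - 1 + 1 = m := by omega
  have hk' : k - 1 + 1 = k := by omega
  have hpowM : (M+1)^m = (M+1)^(m-1) * (M+1) := by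
    have := pow_succ (M+1) (m-1); rw [hm'] at this; exact this
  have hpowMk : M^k = M^(k-1) * M := by
    have := pow_succ M (k-1); rw [hk'] at this; exact this
  have hpowE : (e:ℝ)^k = e^(k-1) * e := by
    have := pow_succ e (k-1); rw [hk'] at this; exact this
  have h4 : (4:ℝ)^(m-1) ≤ 2 * 2^(n-3) := by
    have h41 : (4:ℝ)^(m-1) = 2^(2*(m-1)) := by rw [pow_mul]; norm_num
    have h42 : (2:ℝ) * 2^(n-3) = 2^(n-3+1) := by rw [pow_succ]; ring
    rw [h41, h42]
    exact pow_le_pow_right₀ (by norm_num) (by omega)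
  have hKI : K^k * (M+1)^(m-1) ≤ 2^(n-3) * e^k * (k.factorial:ℝ) * (m.factorial:ℝ) * M := by
    calc K^k * (M+1)^(m-1)
        ≤ (e^(k-1) * (k.factorial:ℝ)) * (4^(m-1) * (m.factorial:ℝ)) := by
          apply mul_le_mul (pow_self_le_exp_factorial (by omega))
            (succ_pow_le_four_pow_factorial hm1) (by positivity) (by positivity)
      _ = (e^(k-1) * 4^(m-1)) * ((k.factorial:ℝ) * (m.factorial:ℝ)) := by ring
      _ ≤ (2^(n-3) * e^k * M) * ((k.factorial:ℝ) * (m.factorial:ℝ)) := by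
          apply mul_le_mul_of_nonneg_right _ (by positivity)
          calc e^(k-1) * 4^(m-1) ≤ e^(k-1) * (2 * 2^(n-3)) := by
                apply mul_le_mul_of_nonneg_left h4 (by positivity)
            _ = (e^(k-1) * 2) * 2^(n-3) := by ring
            _ ≤ (e^(k-1) * e) * 2^(n-3) := by
                apply mul_le_mul_of_nonneg_right _ (by positivity)
                apply mul_le_mul_of_nonneg_left (le_of_lt he2) (by positivity)
            _ = 2^(n-3) * e^k * 1 := by rw [hpowE]; ring
            _ ≤ 2^(n-3) * e^k * M := by
                apply mul_le_mul_of_nonneg_left hM1 (by positivity)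
      _ = 2^(n-3) * e^k * (k.factorial:ℝ) * (m.factorial:ℝ) * M := by ring
  have hchoose : (n.choose k : ℝ) * ((k.factorial:ℝ) * (m.factorial:ℝ)) = (n.factorial:ℝ) := by
    rw [hmdef, ← mul_assoc]
    exact_mod_cast Nat.choose_mul_factorial_mul_factorial hkn
  -- main algebraic step
  have hmain : (n.choose k : ℝ) * (M^(k-1) * (M+1)^m)
      ≤ (M+1) * (n.factorial:ℝ) * 2^(n-3) * e^k * (M/K)^k := by
    rw [div_pow, ← mul_div_assoc, le_div_iff₀ (by positivity)]
    calc (n.choose k : ℝ) * (M^(k-1) * (M+1)^m) * K^k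
        = ((n.choose k : ℝ) * M^(k-1) * (M+1)) * (K^k * (M+1)^(m-1)) := by
          rw [hpowM]; ring
      _ ≤ ((n.choose k : ℝ) * M^(k-1) * (M+1)) *
            (2^(n-3) * e^k * (k.factorial:ℝ) * (m.factorial:ℝ) * M) := by
          apply mul_le_mul_of_nonneg_left hKI (by positivity)
      _ = (M+1) * ((n.choose k : ℝ) * ((k.factorial:ℝ) * (m.factorial:ℝ))) * 2^(n-3) * e^k
            * (M^(k-1) * M) := by ring
      _ = (M+1) * (n.factorial:ℝ) * 2^(n-3) * e^k * M^k := by rw [hchoose, hpowMk]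
  -- put together
  have hfinal : (N:ℝ) ≤ (M+1) * (n.factorial:ℝ) * 2^(n-3) * e^k * ((1-α)/α)^k := by
    calc (N:ℝ) ≤ (n.choose k : ℝ) * (M^(k-1) * (M+1)^m) := hcast
      _ ≤ (M+1) * (n.factorial:ℝ) * 2^(n-3) * e^k * (M/K)^k := hmain
      _ ≤ (M+1) * (n.factorial:ℝ) * 2^(n-3) * e^k * ((1-α)/α)^k := by
          apply mul_le_mul_of_nonneg_left hfracpow (by positivity)
  have hcast2 : ((n - k + 1 : ℕ) : ℝ) = M + 1 := by
    rw [hM, hmdef]; push_cast; ring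
  rw [hcast2]
  exact hfinal
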